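/- Let f : ℝ^d → ℝ be μ-strongly convex (μ > 0) and L-smooth, let A be a real m×d matrix, let M be a real m×m symmetric positive semidefinite matrix, and let ρ > 0. Define Φ : ℝ^m → ℝ by Φ(λ) = sup_{x∈ℝ^d} (−⟨λ, A x⟩ − f(x)) + (ρ/2)⟨λ, Mλ⟩. Then Φ is differentiable and for all λ, λ' ∈ ℝ^m, ⟨∇Φ(λ) − ∇Φ(λ'), λ − λ'⟩ ≥ (1/L)·(λ − λ')ᵀ(AAᵀ + ρ L M)(λ − λ'). In particular, if AAᵀ + ρ L M is positive definite, then Φ is (λmin(AAᵀ + ρ L M)/L)-strongly convex, where λmin denotes the smallest eigenvalue. -/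

import Mathlib

open scoped RealInnerProductSpace
open Matrix

/-- The smallest eigenvalue of a symmetric matrix, as the infimum of the Rayleigh
quotient over unit vectors. -/
noncomputable def lambdaMin {m : ℕ} (M : Matrix (Fin m) (Fin m) ℝ) : ℝ :=
  sInf ((fun v : EuclideanSpace ℝ (Fin m) => ⟪Matrix.toEuclideanLin M v, v⟫) '' {v | ‖v‖ = 1})

section Aux

set_option linter.unusedSectionVars false
set_option maxHeartbeats 1000000

open Set InnerProductSpace Metric Asymptotics
open scoped Topology

variable {E : Type*} [NormedAddCommGroup E] [InnerProductSpace ℝ E] [CompleteSpace E]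
variable {W : Type*} [NormedAddCommGroup W] [InnerProductSpace ℝ W] [CompleteSpace W]

lemma aux_hga_iff {f : E → ℝ} {f' x : E} :
    HasGradientAt f f' x ↔ HasFDerivAt f (toDual ℝ E f') x :=
  hasGradientAt_iff_hasFDerivAt

lemma aux_hga_inner_const (w x : E) : HasGradientAt (fun z => ⟪w, z⟫) w x := by
  rw [aux_hga_iff]
  exact (toDual ℝ E w).hasFDerivAt

lemma aux_HasGradientAt.add' {f g : E → ℝ} {f' g' x : E} (hf : HasGradientAt f f' x)
    (hg : HasGradientAt g g' x) : HasGradientAt (fun z => f z + g z) (f' + g') x := by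
  rw [aux_hga_iff] at *
  rw [map_add]; exact hf.add hg

lemma aux_HasGradientAt.sub' {f g : E → ℝ} {f' g' x : E} (hf : HasGradientAt f f' x)
    (hg : HasGradientAt g g' x) : HasGradientAt (fun z => f z - g z) (f' - g') x := by
  rw [aux_hga_iff] at *
  rw [map_sub]; exact hf.sub hg

lemma aux_line_hasDerivAt {g : E → ℝ} {g' : E → E} (hg : ∀ z, HasGradientAt g (g' z) z)
    (x v : E) (t : ℝ) :
    HasDerivAt (fun s : ℝ => g (x + s • v)) ⟪g' (x + t • v), v⟫ t := by
  have hline : HasDerivAt (fun s : ℝ => x + s • v) v t := by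
    simpa using ((hasDerivAt_id t).smul_const v).const_add x
  have := (aux_hga_iff.1 (hg (x + t • v))).comp_hasDerivAt t hline
  simp only [toDual_apply_apply] at this; exact this

lemma aux_line_convexOn {g : E → ℝ} (hconv : ConvexOn ℝ univ g) (x v : E) :
    ConvexOn ℝ univ (fun s : ℝ => g (x + s • v)) := by
  refine ⟨convex_univ, fun a _ b _ p r hp hr hpr => ?_⟩
  have h2 : p • (x + a • v) + r • (x + b • v) = x + (p * a + r * b) • v := by
    rw [smul_add, smul_add, smul_smul, smul_smul, add_add_add_comm, ← add_smul, hpr,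
      one_smul, ← add_smul]
  have := hconv.2 (mem_univ (x + a • v)) (mem_univ (x + b • v)) hp hr hpr
  rw [h2] at this
  simpa [smul_eq_mul] using this

/-- first-order condition for convex functions -/
lemma aux_convex_first_order {g : E → ℝ} {g' : E → E} (hconv : ConvexOn ℝ univ g)
    (hg : ∀ z, HasGradientAt g (g' z) z) (x y : E) :
    g x + ⟪g' x, y - x⟫ ≤ g y := by
  set v := y - x with hv
  have hder : ∀ t : ℝ, HasDerivAt (fun s : ℝ => g (x + s • v)) ⟪g' (x + t • v), v⟫ t :=
    aux_line_hasDerivAt hg x v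
  have hqconv := aux_line_convexOn hconv x v
  have hslope := hqconv.deriv_le_slope (mem_univ (0:ℝ)) (mem_univ (1:ℝ)) one_pos
    (hder 0).differentiableAt
  rw [(hder 0).deriv] at hslope
  simp only [slope_def_field, zero_smul, add_zero, one_smul] at hslope
  have : ⟪g' x, v⟫ ≤ g (x + v) - g x := by
    simpa [div_one] using hslope
  have hxy : x + v = y := by rw [hv]; abel
  rw [hxy] at this
  linarith

/-- monotone gradient implies convex -/
lemma aux_convex_of_monotone_grad {g : E → ℝ} {g' : E → E}
    (hg : ∀ z, HasGradientAt g (g' z) z)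
    (hmono : ∀ x y : E, 0 ≤ ⟪g' x - g' y, x - y⟫) :
    ConvexOn ℝ univ g := by
  refine ⟨convex_univ, fun x _ y _ a b ha hb hab => ?_⟩
  set v := y - x with hv
  set q : ℝ → ℝ := fun s => g (x + s • v) with hq
  have hder : ∀ t : ℝ, HasDerivAt q ⟪g' (x + t • v), v⟫ t := aux_line_hasDerivAt hg x v
  have hdq : Differentiable ℝ q := fun t => (hder t).differentiableAt
  have hderiv : deriv q = fun t => ⟪g' (x + t • v), v⟫ := funext fun t => (hder t).deriv
  have hmq : Monotone (deriv q) := by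
    rw [hderiv]
    intro s t hst
    have := hmono (x + t • v) (x + s • v)
    have hdiff : (x + t • v) - (x + s • v) = (t - s) • v := by
      rw [add_sub_add_left_eq_sub, ← sub_smul]
    rw [hdiff, inner_smul_right] at this
    have hsub : 0 ≤ ⟪g' (x + t • v) - g' (x + s • v), v⟫ := by
      rcases eq_or_lt_of_le hst with rfl | h
      · simp
      · nlinarith [this]
    rw [inner_sub_left] at hsub
    linarith
  have hqc : ConvexOn ℝ univ q := hmq.convexOn_univ_of_deriv hdq
  have := hqc.2 (mem_univ (0:ℝ)) (mem_univ (1:ℝ)) ha hb hab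
  have h1 : a • (0:ℝ) + b • (1:ℝ) = b := by simp
  rw [h1] at this
  have h2 : q b = g (a • x + b • y) := by
    have : x + b • v = a • x + b • y := by
      rw [hv, smul_sub]
      have : a = 1 - b := by linarith
      rw [this, sub_smul, one_smul]
      abel
    rw [hq]
    simp only
    rw [this]
  have h3 : q 0 = g x := by simp [hq]
  have h4 : q 1 = g y := by simp [hq, hv]
  rw [h2, h3, h4] at this
  simpa using this

/-- descent lemma -/
lemma aux_descent_lemma {f : E → ℝ} {f' : E → E} {L : ℝ}
    (hg : ∀ z, HasGradientAt f (f' z) z)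
    (hlip : ∀ x y : E, ‖f' x - f' y‖ ≤ L * ‖x - y‖) (x v : E) :
    f (x + v) ≤ f x + ⟪f' x, v⟫ + L / 2 * ‖v‖ ^ 2 := by
  set D : ℝ → ℝ := fun t => ⟪f' (x + t • v), v⟫ with hD
  set q : ℝ → ℝ := fun s => f (x + s • v) with hq
  have hder : ∀ t : ℝ, HasDerivAt q (D t) t := aux_line_hasDerivAt hg x v
  set χ : ℝ → ℝ := fun t => q t - t * D 0 - L / 2 * t ^ 2 * ‖v‖ ^ 2 with hχ
  have hderχ : ∀ t : ℝ, HasDerivAt χ (D t - D 0 - L * t * ‖v‖ ^ 2) t := by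
    intro t
    have h1 : HasDerivAt (fun t : ℝ => t * D 0) (D 0) t := by
      simpa using (hasDerivAt_id t).mul_const (D 0)
    have h2 : HasDerivAt (fun t : ℝ => L / 2 * t ^ 2 * ‖v‖ ^ 2) (L * t * ‖v‖ ^ 2) t := by
      have := ((hasDerivAt_pow 2 t).const_mul (L / 2)).mul_const (‖v‖ ^ 2)
      refine this.congr_deriv ?_
      rw [show (2:ℕ) - 1 = 1 from rfl]; push_cast; ring
    exact ((hder t).sub h1).sub h2
  have hkey : ∀ t ∈ Icc (0:ℝ) 1, χ t ≤ χ 0 := by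
    have hanti : AntitoneOn χ (Icc (0:ℝ) 1) := by
      apply antitoneOn_of_deriv_nonpos (convex_Icc 0 1)
      · intro t _
        exact (hderχ t).continuousAt.continuousWithinAt
      · intro t _
        exact (hderχ t).differentiableAt.differentiableWithinAt
      · intro t ht
        rw [interior_Icc] at ht
        rw [(hderχ t).deriv]
        have hb : ‖f' (x + t • v) - f' x‖ ≤ L * (t * ‖v‖) := by
          have := hlip (x + t • v) x
          simpa [norm_smul, abs_of_pos ht.1, mul_assoc] using this
        have : D t - D 0 ≤ L * t * ‖v‖ ^ 2 := by
          have hc : D t - D 0 = ⟪f' (x + t • v) - f' x, v⟫ := by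
            simp [hD, inner_sub_left]
          rw [hc]
          calc ⟪f' (x + t • v) - f' x, v⟫ ≤ ‖f' (x + t • v) - f' x‖ * ‖v‖ :=
                real_inner_le_norm _ _
            _ ≤ L * (t * ‖v‖) * ‖v‖ := by
                apply mul_le_mul_of_nonneg_right hb (norm_nonneg _)
            _ = L * t * ‖v‖ ^ 2 := by ring
        linarith
    intro t ht
    exact hanti (left_mem_Icc.2 zero_le_one) ht ht.1
  have := hkey 1 (right_mem_Icc.2 zero_le_one)
  simp only [hχ, hq, hD, one_pow, mul_one, one_smul, zero_smul, add_zero, one_mul,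
    zero_mul, sub_zero, zero_pow, mul_zero] at this
  linarith [this]

lemma aux_convexOn_sub_inner {f : E → ℝ} (hconv : ConvexOn ℝ univ f) (w : E) :
    ConvexOn ℝ univ (fun z => f z - ⟪w, z⟫) := by
  refine ⟨convex_univ, fun x _ y _ a b ha hb hab => ?_⟩
  have := hconv.2 (mem_univ x) (mem_univ y) ha hb hab
  simp only [inner_add_right, inner_smul_right, smul_eq_mul] at *
  linarith

/-- cocoercivity (Baillon–Haddad) -/
lemma aux_cocoercivity {f : E → ℝ} {f' : E → E} {L : ℝ} (hL : 0 < L)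
    (hconv : ConvexOn ℝ univ f)
    (hg : ∀ z, HasGradientAt f (f' z) z)
    (hlip : ∀ x y : E, ‖f' x - f' y‖ ≤ L * ‖x - y‖) (x y : E) :
    1 / L * ‖f' x - f' y‖ ^ 2 ≤ ⟪f' x - f' y, x - y⟫ := by
  have key : ∀ u v : E,
      f v + ⟪f' v, u - v⟫ + 1 / (2 * L) * ‖f' u - f' v‖ ^ 2 ≤ f u := by
    intro u v
    set φ : E → ℝ := fun z => f z - ⟪f' v, z⟫ with hφ
    set φ' : E → E := fun z => f' z - f' v with hφ'
    have hgφ : ∀ z, HasGradientAt φ (φ' z) z := fun z =>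
      aux_HasGradientAt.sub' (hg z) (aux_hga_inner_const (f' v) z)
    have hφconv : ConvexOn ℝ univ φ := aux_convexOn_sub_inner hconv (f' v)
    have hφlip : ∀ a b : E, ‖φ' a - φ' b‖ ≤ L * ‖a - b‖ := by
      intro a b; simpa [hφ', sub_sub_sub_cancel_right] using hlip a b
    have hmin : ∀ z, φ v ≤ φ z := by
      intro z
      have := aux_convex_first_order hφconv hgφ v z
      simpa [hφ'] using this
    have hdesc := aux_descent_lemma hgφ hφlip u (-(L⁻¹ • φ' u))
    have hval : φ (u + -(L⁻¹ • φ' u)) ≤ φ u - 1 / (2 * L) * ‖φ' u‖ ^ 2 := by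
      have h1 : ⟪φ' u, -(L⁻¹ • φ' u)⟫ = -(L⁻¹ * ‖φ' u‖ ^ 2) := by
        rw [inner_neg_right, inner_smul_right, real_inner_self_eq_norm_sq]
      have h2 : ‖-(L⁻¹ • φ' u)‖ ^ 2 = L⁻¹ ^ 2 * ‖φ' u‖ ^ 2 := by
        rw [norm_neg, norm_smul]
        simp [abs_of_pos (inv_pos.2 hL), mul_pow]
      rw [h1, h2] at hdesc
      calc φ (u + -(L⁻¹ • φ' u))
          ≤ φ u + -(L⁻¹ * ‖φ' u‖ ^ 2) + L / 2 * (L⁻¹ ^ 2 * ‖φ' u‖ ^ 2) := hdesc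
        _ = φ u - 1 / (2 * L) * ‖φ' u‖ ^ 2 := by
            field_simp
            ring
    have := (hmin (u + -(L⁻¹ • φ' u))).trans hval
    have hφu : φ' u = f' u - f' v := rfl
    simp only [hφ] at this
    rw [hφu] at this
    have hinner : ⟪f' v, u⟫ - ⟪f' v, v⟫ = ⟪f' v, u - v⟫ := by rw [inner_sub_right]
    linarith [this, hinner.ge, hinner.le]
  have k1 := key x y
  have k2 := key y x
  have hn : ‖f' y - f' x‖ = ‖f' x - f' y‖ := norm_sub_rev _ _
  rw [hn] at k2
  have e1 : ⟪f' y, x - y⟫ + ⟪f' x, y - x⟫ = -⟪f' x - f' y, x - y⟫ := by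
    rw [inner_sub_left]
    have : (y : E) - x = -(x - y) := by abel
    rw [this, inner_neg_right]
    ring
  have hLL : 1 / L = 2 * (1 / (2 * L)) := by
    field_simp
  rw [hLL]
  nlinarith [k1, k2, e1]

lemma aux_hga_quadratic (T : E →L[ℝ] E) (hT : ∀ u w : E, ⟪T u, w⟫ = ⟪u, T w⟫) (c : ℝ) (x : E) :
    HasGradientAt (fun z => c * ⟪z, T z⟫) ((2 * c) • T x) x := by
  have h1 : HasFDerivAt (fun z : E => ⟪z, T z⟫)
      ((fderivInnerCLM ℝ (x, T x)).comp ((ContinuousLinearMap.id ℝ E).prod T)) x :=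
    (hasFDerivAt_id x).inner ℝ (T.hasFDerivAt)
  have h2 := h1.const_mul c
  rw [hasGradientAt_iff_hasFDerivAt]
  refine h2.congr_fderiv ?_
  ext h
  simp only [ContinuousLinearMap.coe_comp', Function.comp_apply, ContinuousLinearMap.prod_apply,
    ContinuousLinearMap.coe_id', id_eq, fderivInnerCLM_apply, ContinuousLinearMap.coe_smul',
    Pi.smul_apply, toDual_apply_apply, ContinuousLinearMap.smul_apply]
  have e1 : ⟪x, T h⟫ = ⟪T x, h⟫ := (hT x h).symm
  have e2 : ⟪h, T x⟫ = ⟪T x, h⟫ := real_inner_comm _ _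
  rw [inner_smul_left]
  simp only [RCLike.conj_to_real]
  rw [e1, e2]
  simp only [smul_eq_mul]
  ring

lemma aux_hga_norm_sq (c : ℝ) (x : E) :
    HasGradientAt (fun z : E => c * ‖z‖ ^ 2) ((2 * c) • x) x := by
  have := aux_hga_quadratic (ContinuousLinearMap.id ℝ E) (fun u w => rfl) c x
  simp only [ContinuousLinearMap.coe_id', id_eq] at this
  convert this using 2 with z
  · rw [real_inner_self_eq_norm_sq]

lemma aux_convexOn_add_inner {f : E → ℝ} (hconv : ConvexOn ℝ univ f) (w : E) :
    ConvexOn ℝ univ (fun z => f z + ⟪w, z⟫) := by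
  refine ⟨convex_univ, fun x _ y _ a b ha hb hab => ?_⟩
  have := hconv.2 (mem_univ x) (mem_univ y) ha hb hab
  simp only [inner_add_right, inner_smul_right, smul_eq_mul] at *
  linarith

/-- strong monotonicity of the gradient of a strongly convex function -/
lemma aux_strong_mono {f : E → ℝ} {f' : E → E} {μ : ℝ}
    (hsc : ConvexOn ℝ univ (fun x => f x - μ / 2 * ‖x‖ ^ 2))
    (hg : ∀ z, HasGradientAt f (f' z) z) (x y : E) :
    μ * ‖x - y‖ ^ 2 ≤ ⟪f' x - f' y, x - y⟫ := by
  set h' : E → E := fun z => f' z - μ • z with hh'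
  have hgh : ∀ z, HasGradientAt (fun x => f x - μ / 2 * ‖x‖ ^ 2) (h' z) z := by
    intro z
    have := aux_HasGradientAt.sub' (hg z) (aux_hga_norm_sq (μ / 2) z)
    have e : (2 * (μ / 2)) • z = μ • z := by rw [show 2 * (μ / 2) = μ by ring]
    rwa [e] at this
  have h1 := aux_convex_first_order hsc hgh x y
  have h2 := aux_convex_first_order hsc hgh y x
  have e1 : ⟪h' x, y - x⟫ = ⟪f' x, y - x⟫ - μ * ⟪x, y - x⟫ := by
    rw [hh']; simp [inner_sub_left, inner_smul_left]
  have e2 : ⟪h' y, x - y⟫ = ⟪f' y, x - y⟫ - μ * ⟪y, x - y⟫ := by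
    rw [hh']; simp [inner_sub_left, inner_smul_left]
  have e3 : ⟪f' x, y - x⟫ + ⟪f' y, x - y⟫ = -⟪f' x - f' y, x - y⟫ := by
    rw [inner_sub_left, show (y : E) - x = -(x - y) by abel, inner_neg_right]; ring
  have e4 : ⟪x, y - x⟫ + ⟪y, x - y⟫ = -⟪x - y, x - y⟫ := by
    rw [inner_sub_left, show (y : E) - x = -(x - y) by abel, inner_neg_right]; ring
  have e5 : ⟪x - y, x - y⟫ = ‖x - y‖ ^ 2 := real_inner_self_eq_norm_sq (x - y)
  have h3 : ⟪h' x, y - x⟫ + ⟪h' y, x - y⟫ ≤ 0 := by linarith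
  have h4 : ⟪h' x, y - x⟫ + ⟪h' y, x - y⟫ = -(⟪f' x - f' y, x - y⟫ - μ * ‖x - y‖ ^ 2) := by
    rw [e1, e2]
    linear_combination e3 - μ * e4 + μ * e5
  linarith

variable [FiniteDimensional ℝ E]

/-- existence of a global minimizer of `f + ⟪c, ·⟫` with first-order condition -/
lemma aux_exists_minimizer {f : E → ℝ} {f' : E → E} {μ : ℝ} (hμ : 0 < μ)
    (hsc : ConvexOn ℝ univ (fun x => f x - μ / 2 * ‖x‖ ^ 2))
    (hg : ∀ z, HasGradientAt f (f' z) z) (c : E) :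
    ∃ x0 : E, (∀ x, f x0 + ⟪c, x0⟫ ≤ f x + ⟪c, x⟫) ∧ f' x0 = -c := by
  set g : E → ℝ := fun z => f z + ⟪c, z⟫ with hgdef
  set g' : E → E := fun z => f' z + c with hg'def
  have hgg : ∀ z, HasGradientAt g (g' z) z := fun z =>
    aux_HasGradientAt.add' (hg z) (aux_hga_inner_const c z)
  have hgc : Continuous g := by
    apply continuous_iff_continuousAt.2
    intro z
    exact (hgg z).continuousAt
  have hgsc : ConvexOn ℝ univ (fun x => g x - μ / 2 * ‖x‖ ^ 2) := by
    have := aux_convexOn_add_inner hsc c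
    convert this using 2 with z
    ring
  have hgsg : ∀ z, HasGradientAt (fun x => g x - μ / 2 * ‖x‖ ^ 2) (g' z - μ • z) z := by
    intro z
    have := aux_HasGradientAt.sub' (hgg z) (aux_hga_norm_sq (μ / 2) z)
    rwa [show 2 * (μ / 2) = μ by ring] at this
  have hcoer : ∀ x : E, g 0 + (μ / 2 * ‖x‖ ^ 2 - ‖g' 0‖ * ‖x‖) ≤ g x := by
    intro x
    have h1 := aux_convex_first_order hgsc hgsg 0 x
    norm_num at h1
    have h2 : -(‖g' 0‖ * ‖x‖) ≤ ⟪g' 0, x⟫ := by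
      have ha := abs_real_inner_le_norm (g' 0) x
      have hb := neg_abs_le (⟪g' 0, x⟫ : ℝ)
      linarith
    linarith
  set R : ℝ := 2 * ‖g' 0‖ / μ + 1 with hR
  have hRpos : 0 < R := by positivity
  have hout : ∀ x : E, R ≤ ‖x‖ → g 0 < g x := by
    intro x hx
    have h1 := hcoer x
    have hμ' : μ ≠ 0 := ne_of_gt hμ
    have hRe : μ / 2 * R - ‖g' 0‖ = μ / 2 := by rw [hR]; field_simp; ring
    have h2 : μ / 2 ≤ μ / 2 * ‖x‖ - ‖g' 0‖ := by
      have hm := mul_le_mul_of_nonneg_left hx (by positivity : (0:ℝ) ≤ μ / 2)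
      linarith
    have h3 : R * (μ / 2) ≤ ‖x‖ * (μ / 2 * ‖x‖ - ‖g' 0‖) :=
      mul_le_mul hx h2 (by positivity) (norm_nonneg x)
    have h4 : μ / 2 * ‖x‖ ^ 2 - ‖g' 0‖ * ‖x‖ = ‖x‖ * (μ / 2 * ‖x‖ - ‖g' 0‖) := by ring
    have h5 : 0 < R * (μ / 2) := mul_pos hRpos (half_pos hμ)
    clear_value R g g'
    linarith [h1, h3, h4, h5]
  obtain ⟨x0, hx0mem, hx0min⟩ := (isCompact_closedBall (0:E) R).exists_isMinOn
    ⟨0, by simp [hRpos.le]⟩ hgc.continuousOn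
  have hglob : ∀ x, g x0 ≤ g x := by
    intro x
    by_cases hx : x ∈ closedBall (0:E) R
    · exact hx0min hx
    · have : R ≤ ‖x‖ := by
        simp only [mem_closedBall, dist_zero_right, not_le] at hx
        exact hx.le
      exact (hx0min (by simp [hRpos.le] : (0:E) ∈ closedBall (0:E) R)).trans
        (by simpa using (hout x this).le)
  have hloc : IsLocalMin g x0 := Filter.Eventually.of_forall hglob
  have hfd : fderiv ℝ g x0 = 0 := hloc.fderiv_eq_zero
  have hfd2 : fderiv ℝ g x0 = toDual ℝ E (g' x0) :=
    (hasGradientAt_iff_hasFDerivAt.1 (hgg x0)).fderiv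
  have hz : g' x0 = 0 := by
    have := hfd2.symm.trans hfd
    have h2 := (toDual ℝ E).map_zero
    exact (toDual ℝ E).injective (this.trans h2.symm)
  refine ⟨x0, hglob, ?_⟩
  have : f' x0 + c = 0 := hz
  linear_combination (norm := module) this

/-- value of the sup -/
lemma aux_sup_value {f : E → ℝ} (B : W →L[ℝ] E) (xs : W → E)
    (hxs : ∀ lam x, f (xs lam) + ⟪B lam, xs lam⟫ ≤ f x + ⟪B lam, x⟫) (lam : W) :
    (⨆ x : E, (-⟪B lam, x⟫ - f x)) = -(f (xs lam) + ⟪B lam, xs lam⟫) := by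
  have hbdd : BddAbove (Set.range fun x : E => -⟪B lam, x⟫ - f x) := by
    refine ⟨-(f (xs lam) + ⟪B lam, xs lam⟫), ?_⟩
    rintro y ⟨x, rfl⟩
    have := hxs lam x
    simp only
    linarith
  refine le_antisymm (ciSup_le fun x => by have := hxs lam x; linarith) ?_
  have := le_ciSup hbdd (xs lam)
  simpa using by linarith [this]

/-- differentiability of the sup function -/
lemma aux_sup_hasGradient {f : E → ℝ} {f' : E → E} {μ : ℝ} (hμ : 0 < μ)
    (smono : ∀ x y : E, μ * ‖x - y‖ ^ 2 ≤ ⟪f' x - f' y, x - y⟫)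
    (B : W →L[ℝ] E) (xs : W → E)
    (hxs : ∀ lam x, f (xs lam) + ⟪B lam, xs lam⟫ ≤ f x + ⟪B lam, x⟫)
    (hgx : ∀ lam, f' (xs lam) = -(B lam))
    (w : W → W) (hw : ∀ lam u, ⟪w lam, u⟫ = ⟪B u, xs lam⟫) (lam : W) :
    HasGradientAt (fun l => ⨆ x : E, (-⟪B l, x⟫ - f x)) (-(w lam)) lam := by
  have hlipxs : ∀ a b : W, ‖xs a - xs b‖ ≤ ‖B (a - b)‖ / μ := by
    intro a b
    have h1 := smono (xs a) (xs b)
    rw [hgx a, hgx b] at h1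
    have h2 : ⟪-(B a) - -(B b), xs a - xs b⟫ ≤ ‖B (a - b)‖ * ‖xs a - xs b‖ := by
      have : -(B a) - -(B b) = -(B (a - b)) := by rw [map_sub]; abel
      rw [this, inner_neg_left]
      have := abs_real_inner_le_norm (B (a - b)) (xs a - xs b)
      linarith [neg_abs_le (⟪B (a - b), xs a - xs b⟫ : ℝ)]
    rcases eq_or_ne (xs a) (xs b) with he | he
    · simp [he]; positivity
    · have hn : 0 < ‖xs a - xs b‖ := by
        rw [norm_pos_iff, sub_ne_zero]; exact he
      rw [le_div_iff₀ hμ]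
      nlinarith [h1, h2, hn]
  set F : W → ℝ := fun l => ⨆ x : E, (-⟪B l, x⟫ - f x) with hF
  have hval : ∀ l, F l = -(f (xs l) + ⟪B l, xs l⟫) := fun l => aux_sup_value B xs hxs l
  rw [hasGradientAt_iff_hasFDerivAt, hasFDerivAt_iff_isLittleO_nhds_zero]
  have key : ∀ h : W, |F (lam + h) - F lam - (toDual ℝ W (-(w lam))) h|
      ≤ ‖B‖ ^ 2 / μ * ‖h‖ ^ 2 := by
    intro h
    have e0 : (toDual ℝ W (-(w lam))) h = -⟪B h, xs lam⟫ := by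
      rw [toDual_apply_apply, inner_neg_left, hw]
    set x1 := xs lam with hx1
    set x2 := xs (lam + h) with hx2
    have hBh : ‖B h‖ ≤ ‖B‖ * ‖h‖ := B.le_opNorm h
    have hlip : ‖x2 - x1‖ ≤ ‖B h‖ / μ := by
      have := hlipxs (lam + h) lam
      simpa using this
    have hupper : F (lam + h) - F lam - (toDual ℝ W (-(w lam))) h ≤ ‖B‖ ^ 2 / μ * ‖h‖ ^ 2 := by
      rw [e0, hval, hval]
      have hmin := hxs lam x2
      have expand : ⟪B (lam + h), x2⟫ = ⟪B lam, x2⟫ + ⟪B h, x2⟫ := by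
        rw [map_add, inner_add_left]
      have hcs : ⟪B h, x1 - x2⟫ ≤ ‖B h‖ * ‖x1 - x2‖ := real_inner_le_norm _ _
      have hx12 : ‖x1 - x2‖ ≤ ‖B h‖ / μ := by rw [norm_sub_rev]; exact hlip
      have hstep : ‖B h‖ * ‖x1 - x2‖ ≤ ‖B h‖ * (‖B h‖ / μ) :=
        mul_le_mul_of_nonneg_left hx12 (norm_nonneg _)
      have hfinal : ‖B h‖ * (‖B h‖ / μ) ≤ ‖B‖ ^ 2 / μ * ‖h‖ ^ 2 := by
        have hnum : ‖B h‖ * ‖B h‖ ≤ ‖B‖ ^ 2 * ‖h‖ ^ 2 := by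
          nlinarith [hBh, norm_nonneg (B h), norm_nonneg h, norm_nonneg B]
        calc ‖B h‖ * (‖B h‖ / μ) = ‖B h‖ * ‖B h‖ / μ := by ring
          _ ≤ ‖B‖ ^ 2 * ‖h‖ ^ 2 / μ := (div_le_div_iff_of_pos_right hμ).2 hnum
          _ = ‖B‖ ^ 2 / μ * ‖h‖ ^ 2 := by ring
      have hinssub : ⟪B h, x1⟫ - ⟪B h, x2⟫ = ⟪B h, x1 - x2⟫ := by rw [inner_sub_right]
      linarith [hmin, expand.le, expand.ge, hcs, hstep, hfinal, hinssub.le, hinssub.ge]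
    have hlower : 0 ≤ F (lam + h) - F lam - (toDual ℝ W (-(w lam))) h := by
      rw [e0, hval, hval]
      have hmin := hxs (lam + h) x1
      have expand : ⟪B (lam + h), x1⟫ = ⟪B lam, x1⟫ + ⟪B h, x1⟫ := by
        rw [map_add, inner_add_left]
      linarith [hmin, expand.le, expand.ge]
    rw [abs_le]
    constructor
    · nlinarith [hlower, sq_nonneg ‖h‖, norm_nonneg B, hμ,
        mul_nonneg (mul_nonneg (norm_nonneg B) (norm_nonneg B)) (sq_nonneg ‖h‖)]
    · exact hupper
  have hbig : (fun h : W => F (lam + h) - F lam - (toDual ℝ W (-(w lam))) h)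
      =O[𝓝 0] fun h : W => ‖h‖ ^ 2 := by
    apply IsBigO.of_bound (‖B‖ ^ 2 / μ)
    filter_upwards with h
    rw [Real.norm_eq_abs]
    have := key h
    calc |F (lam + h) - F lam - (toDual ℝ W (-(w lam))) h| ≤ ‖B‖ ^ 2 / μ * ‖h‖ ^ 2 := this
      _ ≤ ‖B‖ ^ 2 / μ * ‖(‖h‖ ^ 2)‖ := by
          rw [Real.norm_eq_abs, abs_of_nonneg (sq_nonneg _)]
  have hlittle : (fun h : W => ‖h‖ ^ 2) =o[𝓝 0] fun h : W => h := by
    rw [isLittleO_iff]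
    intro c hc
    filter_upwards [Metric.ball_mem_nhds (0:W) hc] with h hh
    rw [Metric.mem_ball, dist_zero_right] at hh
    rw [Real.norm_eq_abs, abs_of_nonneg (sq_nonneg _), pow_two]
    exact mul_le_mul_of_nonneg_right hh.le (norm_nonneg _)
  exact hbig.trans_isLittleO hlittle

end Aux

section Bridges

open Matrix

lemma aux_inner_toEuclideanLin {m : ℕ} (N : Matrix (Fin m) (Fin m) ℝ)
    (v : EuclideanSpace ℝ (Fin m)) :
    ⟪Matrix.toEuclideanLin N v, v⟫ =
      dotProduct (WithLp.equiv 2 (Fin m → ℝ) v) (N *ᵥ (WithLp.equiv 2 (Fin m → ℝ) v)) := by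
  simp [PiLp.inner_apply, Matrix.toEuclideanLin_apply, dotProduct, mul_comm]

lemma aux_psd_inner {m : ℕ} {N : Matrix (Fin m) (Fin m) ℝ} (h : N.PosSemidef)
    (v : EuclideanSpace ℝ (Fin m)) : 0 ≤ ⟪Matrix.toEuclideanLin N v, v⟫ := by
  rw [aux_inner_toEuclideanLin]
  have := h.dotProduct_mulVec_nonneg (WithLp.equiv 2 (Fin m → ℝ) v)
  simpa using this

lemma aux_pd_inner {m : ℕ} {N : Matrix (Fin m) (Fin m) ℝ} (h : N.PosDef)
    {v : EuclideanSpace ℝ (Fin m)} (hv : v ≠ 0) : 0 < ⟪Matrix.toEuclideanLin N v, v⟫ := by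
  rw [aux_inner_toEuclideanLin]
  have hv' : (WithLp.equiv 2 (Fin m → ℝ) v) ≠ 0 := by
    intro h0
    exact hv ((WithLp.equiv 2 (Fin m → ℝ)).injective (by simpa using h0))
  have := h.dotProduct_mulVec_pos hv'
  simpa using this

end Bridges

set_option maxHeartbeats 2000000 in
/-- Let `f : ℝ^d → ℝ` be `μ`-strongly convex (`μ > 0`) and `L`-smooth, `A` an `m × d`
matrix, `M` a symmetric positive semidefinite `m × m` matrix, `ρ > 0`, and
`Φ(λ) = sup_x (−⟪λ, A x⟫ − f x) + (ρ/2)⟪λ, M λ⟫`.  Then `Φ` is differentiable and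
`⟪∇Φ(λ) − ∇Φ(λ'), λ − λ'⟫ ≥ (1/L)(λ − λ')ᵀ (A Aᵀ + ρ L M)(λ − λ')` for all `λ, λ'`.
In particular, if `A Aᵀ + ρ L M` is positive definite, then `Φ` is
`(λmin(A Aᵀ + ρ L M)/L)`-strongly convex. -/
theorem stmt2 {d m : ℕ} (μ L ρ : ℝ) (hμ : 0 < μ) (hρ : 0 < ρ)
    (f : EuclideanSpace ℝ (Fin d) → ℝ)
    (hf : ConvexOn ℝ Set.univ (fun x => f x - μ / 2 * ‖x‖ ^ 2))
    (hfd : Differentiable ℝ f)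
    (hfs : ∀ x y : EuclideanSpace ℝ (Fin d), ‖gradient f x - gradient f y‖ ≤ L * ‖x - y‖)
    (A : Matrix (Fin m) (Fin d) ℝ)
    (M : Matrix (Fin m) (Fin m) ℝ) (hMsymm : M.IsSymm) (hMpsd : M.PosSemidef)
    (Φ : EuclideanSpace ℝ (Fin m) → ℝ)
    (hΦ : ∀ lam, Φ lam = (⨆ x : EuclideanSpace ℝ (Fin d),
        (-⟪lam, Matrix.toEuclideanLin A x⟫ - f x))
      + ρ / 2 * ⟪lam, Matrix.toEuclideanLin M lam⟫) :
    Differentiable ℝ Φ ∧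
    (∀ lam lam' : EuclideanSpace ℝ (Fin m),
        (1 / L) * ⟪Matrix.toEuclideanLin (A * Aᵀ + (ρ * L) • M) (lam - lam'), lam - lam'⟫
          ≤ ⟪gradient Φ lam - gradient Φ lam', lam - lam'⟫) ∧
    ((A * Aᵀ + (ρ * L) • M).PosDef →
      ConvexOn ℝ Set.univ
        (fun lam => Φ lam - lambdaMin (A * Aᵀ + (ρ * L) • M) / L / 2 * ‖lam‖ ^ 2)) := by
  classical
  have hgradf : ∀ z, HasGradientAt f (gradient f z) z := fun z => (hfd z).hasGradientAt
  have smono := aux_strong_mono hf hgradf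
  obtain ⟨B, hB⟩ : ∃ B : EuclideanSpace ℝ (Fin m) →L[ℝ] EuclideanSpace ℝ (Fin d),
      ∀ l, B l = Matrix.toEuclideanLin Aᵀ l :=
    ⟨LinearMap.toContinuousLinearMap (Matrix.toEuclideanLin Aᵀ), fun _ => rfl⟩
  obtain ⟨TM, hTM⟩ : ∃ TM : EuclideanSpace ℝ (Fin m) →L[ℝ] EuclideanSpace ℝ (Fin m),
      ∀ l, TM l = Matrix.toEuclideanLin M l :=
    ⟨LinearMap.toContinuousLinearMap (Matrix.toEuclideanLin M), fun _ => rfl⟩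
  have hAdjA : ∀ (l : EuclideanSpace ℝ (Fin m)) (x : EuclideanSpace ℝ (Fin d)),
      ⟪l, Matrix.toEuclideanLin A x⟫ = ⟪B l, x⟫ := by
    intro l x
    rw [hB, ← Matrix.conjTranspose_eq_transpose_of_trivial,
      Matrix.toEuclideanLin_conjTranspose_eq_adjoint]
    exact (LinearMap.adjoint_inner_left (Matrix.toEuclideanLin A) x l).symm
  have hAdjM : ∀ u v : EuclideanSpace ℝ (Fin m),
      ⟪Matrix.toEuclideanLin M u, v⟫ = ⟪u, Matrix.toEuclideanLin M v⟫ := by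
    intro u v
    have hM' : Matrix.toEuclideanLin M = LinearMap.adjoint (Matrix.toEuclideanLin M) := by
      conv_lhs => rw [← hMsymm.eq, ← Matrix.conjTranspose_eq_transpose_of_trivial,
        Matrix.toEuclideanLin_conjTranspose_eq_adjoint]
    conv_lhs => rw [hM']
    exact LinearMap.adjoint_inner_left (Matrix.toEuclideanLin M) v u
  have hTMsym : ∀ u v : EuclideanSpace ℝ (Fin m), ⟪TM u, v⟫ = ⟪u, TM v⟫ := by
    intro u v; rw [hTM, hTM]; exact hAdjM u v
  choose xs hxs1 hxs2 using fun lam => aux_exists_minimizer hμ hf hgradf (B lam)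
  obtain ⟨w, hwdef⟩ : ∃ w : EuclideanSpace ℝ (Fin m) → EuclideanSpace ℝ (Fin m),
      ∀ lam, w lam = Matrix.toEuclideanLin A (xs lam) := ⟨_, fun _ => rfl⟩
  have hw : ∀ lam u, ⟪w lam, u⟫ = ⟪B u, xs lam⟫ := by
    intro lam u
    rw [hwdef, real_inner_comm, hAdjA]
  have hFgrad : ∀ lam, HasGradientAt
      (fun l => ⨆ x : EuclideanSpace ℝ (Fin d), (-⟪B l, x⟫ - f x)) (-(w lam)) lam :=
    fun lam => aux_sup_hasGradient hμ smono B xs hxs1 hxs2 w hw lam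
  have hΦeq : Φ = fun l => (⨆ x : EuclideanSpace ℝ (Fin d), (-⟪B l, x⟫ - f x))
      + ρ / 2 * ⟪l, TM l⟫ := by
    funext l
    rw [hΦ l]
    congr 1
    · exact iSup_congr fun x => by rw [hAdjA]
    · rw [hTM]
  have hQgrad : ∀ lam, HasGradientAt
      (fun l : EuclideanSpace ℝ (Fin m) => ρ / 2 * ⟪l, TM l⟫) (ρ • TM lam) lam := by
    intro lam
    have := aux_hga_quadratic TM hTMsym (ρ / 2) lam
    rwa [show 2 * (ρ / 2) = ρ by ring] at this
  have hGradΦ : ∀ lam, HasGradientAt Φ (-(w lam) + ρ • TM lam) lam := by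
    intro lam
    rw [hΦeq]
    exact aux_HasGradientAt.add' (hFgrad lam) (hQgrad lam)
  have hdiff : Differentiable ℝ Φ := fun lam => (hGradΦ lam).differentiableAt
  have hgv : ∀ lam, gradient Φ lam = -(w lam) + ρ • TM lam := fun lam => (hGradΦ lam).gradient
  have hMq : ∀ v, 0 ≤ ⟪Matrix.toEuclideanLin M v, v⟫ := fun v => aux_psd_inner hMpsd v
  -- expansion of the quadratic form
  have eL : ∀ v : EuclideanSpace ℝ (Fin m),
      ⟪Matrix.toEuclideanLin (A * Aᵀ + (ρ * L) • M) v, v⟫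
        = ‖B v‖ ^ 2 + ρ * L * ⟪Matrix.toEuclideanLin M v, v⟫ := by
    intro v
    have h1 : Matrix.toEuclideanLin (A * Aᵀ + (ρ * L) • M) v
        = Matrix.toEuclideanLin (A * Aᵀ) v + (ρ * L) • Matrix.toEuclideanLin M v := by
      simp [map_add, _root_.map_smul]
    rw [h1, inner_add_left, real_inner_smul_left]
    congr 1
    have h2 : Matrix.toEuclideanLin (A * Aᵀ) v
        = Matrix.toEuclideanLin A (Matrix.toEuclideanLin Aᵀ v) := by
      simp [Matrix.toEuclideanLin_apply, Matrix.mulVec_mulVec]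
    rw [h2, real_inner_comm, hAdjA, ← hB, real_inner_self_eq_norm_sq]
  have hLd : 0 < d → μ ≤ L := by
    intro hd
    set e := EuclideanSpace.single (⟨0, hd⟩ : Fin d) (1:ℝ) with he
    have hne : ‖e‖ = 1 := by rw [he, EuclideanSpace.norm_single]; norm_num
    have h1 := smono e 0
    have h2 := hfs e 0
    have h3 : ⟪gradient f e - gradient f 0, e - 0⟫
        ≤ ‖gradient f e - gradient f 0‖ * ‖e - 0‖ := real_inner_le_norm _ _
    rw [sub_zero] at h1 h2 h3
    rw [hne] at h1
    have h4 : ‖gradient f e - gradient f 0‖ * ‖e‖ ≤ L * ‖e‖ := by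
      calc ‖gradient f e - gradient f 0‖ * ‖e‖ ≤ (L * ‖e‖) * ‖e‖ :=
            mul_le_mul_of_nonneg_right h2 (norm_nonneg _)
        _ = L * ‖e‖ := by rw [hne]; ring
    rw [hne] at h4
    nlinarith [h1, h3, h4]
  -- key monotonicity inequality, with explicit gradients
  have key2 : ∀ lam lam' : EuclideanSpace ℝ (Fin m),
      (1 / L) * ⟪Matrix.toEuclideanLin (A * Aᵀ + (ρ * L) • M) (lam - lam'), lam - lam'⟫
        ≤ ⟪(-(w lam) + ρ • TM lam) - (-(w lam') + ρ • TM lam'), lam - lam'⟫ := by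
    intro lam lam'
    have eR : ⟪(-(w lam) + ρ • TM lam) - (-(w lam') + ρ • TM lam'), lam - lam'⟫
        = ⟪w lam' - w lam, lam - lam'⟫
          + ρ * ⟪Matrix.toEuclideanLin M (lam - lam'), lam - lam'⟫ := by
      have hvec : (-(w lam) + ρ • TM lam) - (-(w lam') + ρ • TM lam')
          = (w lam' - w lam) + ρ • (TM (lam - lam')) := by
        rw [map_sub]
        module
      rw [hvec, inner_add_left, real_inner_smul_left, hTM]
    have hBz : B (lam - lam') = gradient f (xs lam') - gradient f (xs lam) := by
      rw [hxs2 lam', hxs2 lam, map_sub]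
      abel
    have hwterm : ⟪w lam' - w lam, lam - lam'⟫ = ⟪xs lam' - xs lam, B (lam - lam')⟫ := by
      rw [hwdef, hwdef, ← map_sub, real_inner_comm, hAdjA]
      exact real_inner_comm _ _
    rcases Nat.eq_zero_or_pos d with hd | hd
    · haveI : Subsingleton (EuclideanSpace ℝ (Fin d)) := by rw [hd]; infer_instance
      have hBz0 : B (lam - lam') = 0 := Subsingleton.elim _ _
      have hxs0 : xs lam' - xs lam = (0 : EuclideanSpace ℝ (Fin d)) := Subsingleton.elim _ _
      rw [eL, eR, hwterm, hxs0, hBz0]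
      simp only [inner_zero_left, norm_zero]
      rcases eq_or_ne L 0 with hL0 | hL0
      · rw [hL0]
        simp only [div_zero, zero_mul, mul_zero, zero_add]
        have := hMq (lam - lam')
        positivity
      · have harith : 1 / L * ((0:ℝ) ^ 2 + ρ * L * ⟪Matrix.toEuclideanLin M (lam - lam'),
            lam - lam'⟫) = ρ * ⟪Matrix.toEuclideanLin M (lam - lam'), lam - lam'⟫ := by
          field_simp
          ring
        rw [harith]
        linarith
    · have hL : 0 < L := lt_of_lt_of_le hμ (hLd hd)
      have hfconv : ConvexOn ℝ Set.univ f := by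
        have hnc : ConvexOn ℝ Set.univ (fun x : EuclideanSpace ℝ (Fin d) => μ / 2 * ‖x‖ ^ 2) := by
          apply aux_convex_of_monotone_grad (g' := fun x => μ • x)
          · intro x
            have := aux_hga_norm_sq (μ / 2) x
            rwa [show 2 * (μ / 2) = μ by ring] at this
          · intro x y
            rw [← smul_sub, real_inner_smul_left]
            exact mul_nonneg hμ.le real_inner_self_nonneg
        have hsum := hf.add hnc
        have heq : ((fun x => f x - μ / 2 * ‖x‖ ^ 2)
            + fun x : EuclideanSpace ℝ (Fin d) => μ / 2 * ‖x‖ ^ 2) = f := by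
          funext x
          simp only [Pi.add_apply]
          ring
        rwa [heq] at hsum
      have hco := aux_cocoercivity hL hfconv hgradf hfs (xs lam') (xs lam)
      have hterm : 1 / L * ‖B (lam - lam')‖ ^ 2 ≤ ⟪xs lam' - xs lam, B (lam - lam')⟫ := by
        rw [hBz, real_inner_comm]
        exact hco
      rw [eL, eR, hwterm]
      have harith : 1 / L * (‖B (lam - lam')‖ ^ 2
          + ρ * L * ⟪Matrix.toEuclideanLin M (lam - lam'), lam - lam'⟫)
          = 1 / L * ‖B (lam - lam')‖ ^ 2
            + ρ * ⟪Matrix.toEuclideanLin M (lam - lam'), lam - lam'⟫ := by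
        field_simp
      rw [harith]
      linarith
  refine ⟨hdiff, fun lam lam' => by rw [hgv lam, hgv lam']; exact key2 lam lam', ?_⟩
  -- Part 3
  intro hPD
  rcases Nat.eq_zero_or_pos m with hm | hm
  · haveI : Subsingleton (EuclideanSpace ℝ (Fin m)) := by rw [hm]; infer_instance
    refine ⟨convex_univ, fun x _ y _ a b ha hb hab => ?_⟩
    have h1 : y = x := Subsingleton.elim _ _
    have h2 : a • x + b • x = x := Subsingleton.elim _ _
    rw [h1, h2, smul_eq_mul, smul_eq_mul, ← add_mul, hab, one_mul]
  · have hq0 : ∀ v, 0 ≤ ⟪Matrix.toEuclideanLin (A * Aᵀ + (ρ * L) • M) v, v⟫ :=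
      fun v => aux_psd_inner hPD.posSemidef v
    have hL : 0 < L := by
      rcases Nat.eq_zero_or_pos d with hd | hd
      · haveI : Subsingleton (EuclideanSpace ℝ (Fin d)) := by rw [hd]; infer_instance
        set e := EuclideanSpace.single (⟨0, hm⟩ : Fin m) (1:ℝ) with he
        have hne : e ≠ 0 := by
          intro h0
          have : ‖e‖ = 1 := by rw [he, EuclideanSpace.norm_single]; norm_num
          rw [h0, norm_zero] at this
          norm_num at this
        have hpos := aux_pd_inner hPD hne
        rw [eL] at hpos
        have hBe : B e = 0 := Subsingleton.elim _ _
        rw [hBe, norm_zero, show (0:ℝ) ^ 2 = 0 by norm_num, zero_add] at hpos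
        have hqM := hMq e
        nlinarith [hpos, mul_nonneg hρ.le hqM]
      · exact lt_of_lt_of_le hμ (hLd hd)
    have hray : ∀ v : EuclideanSpace ℝ (Fin m),
        lambdaMin (A * Aᵀ + (ρ * L) • M) * ‖v‖ ^ 2
          ≤ ⟪Matrix.toEuclideanLin (A * Aᵀ + (ρ * L) • M) v, v⟫ := by
      intro v
      rcases eq_or_ne v 0 with rfl | hv
      · simp
      · have hvn : 0 < ‖v‖ := norm_pos_iff.2 hv
        have hu : ‖(‖v‖⁻¹ • v : EuclideanSpace ℝ (Fin m))‖ = 1 := by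
          rw [norm_smul, norm_inv, norm_norm, inv_mul_cancel₀ hvn.ne']
        have hbdd : BddBelow ((fun v : EuclideanSpace ℝ (Fin m) =>
            ⟪Matrix.toEuclideanLin (A * Aᵀ + (ρ * L) • M) v, v⟫) '' {v | ‖v‖ = 1}) := by
          refine ⟨0, ?_⟩
          rintro y ⟨v', _, rfl⟩
          exact hq0 v'
        have hmem : ⟪Matrix.toEuclideanLin (A * Aᵀ + (ρ * L) • M) (‖v‖⁻¹ • v), ‖v‖⁻¹ • v⟫
            ∈ ((fun v : EuclideanSpace ℝ (Fin m) =>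
              ⟪Matrix.toEuclideanLin (A * Aᵀ + (ρ * L) • M) v, v⟫) '' {v | ‖v‖ = 1}) :=
          ⟨‖v‖⁻¹ • v, hu, rfl⟩
        have h1 : lambdaMin (A * Aᵀ + (ρ * L) • M)
            ≤ ⟪Matrix.toEuclideanLin (A * Aᵀ + (ρ * L) • M) (‖v‖⁻¹ • v), ‖v‖⁻¹ • v⟫ :=
          csInf_le hbdd hmem
        have h2 : ⟪Matrix.toEuclideanLin (A * Aᵀ + (ρ * L) • M) (‖v‖⁻¹ • v), ‖v‖⁻¹ • v⟫
            = (‖v‖⁻¹) ^ 2 * ⟪Matrix.toEuclideanLin (A * Aᵀ + (ρ * L) • M) v, v⟫ := by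
          rw [LinearMap.map_smul, real_inner_smul_left, real_inner_smul_right]
          ring
        rw [h2] at h1
        have h3 := mul_le_mul_of_nonneg_left h1 (sq_nonneg ‖v‖)
        have h4 : ‖v‖ ^ 2 * ((‖v‖⁻¹) ^ 2
            * ⟪Matrix.toEuclideanLin (A * Aᵀ + (ρ * L) • M) v, v⟫)
            = ⟪Matrix.toEuclideanLin (A * Aᵀ + (ρ * L) • M) v, v⟫ := by
          field_simp
        linarith [h3, h4.le, h4.ge]
    -- convexity from monotone gradient
    apply aux_convex_of_monotone_grad
      (g' := fun lam => (-(w lam) + ρ • TM lam) - (lambdaMin (A * Aᵀ + (ρ * L) • M) / L) • lam)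
    · intro lam
      have hns := aux_hga_norm_sq (lambdaMin (A * Aᵀ + (ρ * L) • M) / L / 2) lam
      rw [show 2 * (lambdaMin (A * Aᵀ + (ρ * L) • M) / L / 2)
        = lambdaMin (A * Aᵀ + (ρ * L) • M) / L by ring] at hns
      exact aux_HasGradientAt.sub' (hGradΦ lam) hns
    · intro x y
      have hk := key2 x y
      have hr := hray (x - y)
      have hG'sub : ((-(w x) + ρ • TM x) - (lambdaMin (A * Aᵀ + (ρ * L) • M) / L) • x)
          - ((-(w y) + ρ • TM y) - (lambdaMin (A * Aᵀ + (ρ * L) • M) / L) • y)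
          = ((-(w x) + ρ • TM x) - (-(w y) + ρ • TM y))
            - (lambdaMin (A * Aᵀ + (ρ * L) • M) / L) • (x - y) := by
        module
      rw [hG'sub, inner_sub_left, real_inner_smul_left, real_inner_self_eq_norm_sq]
      have h5 : 1 / L * (lambdaMin (A * Aᵀ + (ρ * L) • M) * ‖x - y‖ ^ 2)
          ≤ 1 / L * ⟪Matrix.toEuclideanLin (A * Aᵀ + (ρ * L) • M) (x - y), x - y⟫ :=
        mul_le_mul_of_nonneg_left hr (by positivity)
      have h6 : lambdaMin (A * Aᵀ + (ρ * L) • M) / L * ‖x - y‖ ^ 2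
          = 1 / L * (lambdaMin (A * Aᵀ + (ρ * L) • M) * ‖x - y‖ ^ 2) := by ring
      linarith [hk, h5, h6.le, h6.ge]
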